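/- Let R > 1 and C > 0 be real numbers and let S = ∑_{j≥0} s_j b^j be a formal power series with complex coefficients such that s_0 ≠ 0 and |s_j| ≤ C·R^j·j! for all j. Then the multiplicative inverse T = S^{-1} in the ring of formal power series (which exists since s_0 ≠ 0) also has coefficients of Gevrey type 1: there exist ρ > 1 and D > 0 such that the coefficients t_j of T satisfy |t_j| ≤ D·ρ^j·j! for all j. -/

import Mathlib

/-- If `S` has nonzero constant term and coefficients of Gevrey type 1, i.e.
`|s_j| ≤ C R^j j!`, then its multiplicative inverse in `ℂ[[b]]` also has coefficients of
Gevrey type 1. -/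
theorem stmt_5 (R C : ℝ) (hR : 1 < R) (hC : 0 < C)
    (S : PowerSeries ℂ) (h0 : PowerSeries.coeff 0 S ≠ 0)
    (hS : ∀ j : ℕ, ‖PowerSeries.coeff j S‖ ≤ C * R ^ j * j.factorial) :
    ∃ ρ : ℝ, 1 < ρ ∧ ∃ D : ℝ, 0 < D ∧ ∀ j : ℕ,
      ‖PowerSeries.coeff j S⁻¹‖ ≤ D * ρ ^ j * j.factorial := by
  have ha : (0:ℝ) < ‖PowerSeries.coeff 0 S‖ := norm_pos_iff.mpr h0
  set a : ℝ := ‖PowerSeries.coeff 0 S‖ with ha_def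
  have hR0 : (0:ℝ) < R := by linarith
  have hCRa : 0 < C * R / a := by positivity
  set ρ : ℝ := R + C * R / a + 1 with hρ_def
  have hρR : R < ρ := by rw [hρ_def]; linarith
  have hρ1 : 1 < ρ := lt_trans hR hρR
  have hρ0 : 0 < ρ := by linarith
  set D : ℝ := 1 / a + 1 with hD_def
  have hD : 0 < D := by positivity
  refine ⟨ρ, hρ1, D, hD, ?_⟩
  have hcc : PowerSeries.constantCoeff S = PowerSeries.coeff 0 S :=
    (PowerSeries.coeff_zero_eq_constantCoeff_apply S).symm
  set x : ℝ := R / ρ with hx_def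
  have hx0 : 0 < x := div_pos hR0 hρ0
  have hx1 : x < 1 := (div_lt_one hρ0).mpr hρR
  have h1x : (0:ℝ) < 1 - x := by linarith
  have geo : ∀ n : ℕ, ∑ i ∈ Finset.range n, x ^ i ≤ 1 / (1 - x) := by
    intro n
    rw [le_div_iff₀ h1x]
    have hgm := geom_sum_mul x n
    nlinarith [pow_nonneg hx0.le n]
  have hxρ : x * ρ = R := div_mul_cancel₀ R hρ0.ne'
  have haρ : a * (ρ - R) = C * R + a := by
    rw [hρ_def]; field_simp; ring
  have hfrac : x / (1 - x) ≤ a / C := by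
    rw [div_le_div_iff₀ h1x hC]
    nlinarith [hρ0, ha]
  intro j
  induction j using Nat.strong_induction_on with
  | _ q ih =>
  rcases Nat.eq_zero_or_pos q with rfl | hq
  · rw [PowerSeries.coeff_inv, if_pos rfl, norm_inv, hcc, ← ha_def]
    simp only [pow_zero, Nat.factorial_zero, Nat.cast_one, mul_one]
    rw [hD_def, inv_eq_one_div]; linarith
  · rw [PowerSeries.coeff_inv, if_neg hq.ne',
      Finset.Nat.sum_antidiagonal_eq_sum_range_succ_mk,
      norm_mul, norm_neg, norm_inv, hcc, ← ha_def]
    have key : ‖∑ i ∈ Finset.range (q+1),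
        (if q - i < q then PowerSeries.coeff i S * PowerSeries.coeff (q - i) S⁻¹ else 0)‖
        ≤ C * D * q.factorial * (ρ ^ q * (x / (1 - x))) := by
      have step1 : ∀ i ∈ Finset.range (q+1),
          ‖if q - i < q then PowerSeries.coeff i S * PowerSeries.coeff (q - i) S⁻¹ else 0‖
          ≤ C * D * q.factorial * (if i = 0 then 0 else ρ ^ q * x ^ i) := by
        intro i hi
        have hiq : i ≤ q := Nat.lt_succ_iff.mp (Finset.mem_range.mp hi)
        rcases Nat.eq_zero_or_pos i with rfl | hi1
        · simp [Nat.lt_irrefl]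
        · rw [if_pos (Nat.sub_lt hq hi1), if_neg hi1.ne', norm_mul]
          have hfact : (i.factorial : ℝ) * (q - i).factorial ≤ q.factorial := by
            have hdvd := Nat.factorial_mul_factorial_dvd_factorial hiq
            exact_mod_cast Nat.cast_le.mpr (Nat.le_of_dvd q.factorial_pos hdvd)
          have hpow : R ^ i * ρ ^ (q - i) = ρ ^ q * x ^ i := by
            have hq' : ρ ^ q = ρ ^ i * ρ ^ (q - i) := by
              rw [← pow_add, Nat.add_sub_cancel' hiq]
            rw [hq', hx_def, div_pow]
            field_simp
          calc ‖PowerSeries.coeff i S‖ * ‖PowerSeries.coeff (q - i) S⁻¹‖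
              ≤ (C * R ^ i * i.factorial) * (D * ρ ^ (q - i) * (q - i).factorial) := by
                apply mul_le_mul (hS i) (ih (q - i) (Nat.sub_lt hq hi1)) (norm_nonneg _)
                positivity
            _ = C * D * ((i.factorial : ℝ) * (q - i).factorial) * (R ^ i * ρ ^ (q - i)) := by
                ring
            _ ≤ C * D * q.factorial * (R ^ i * ρ ^ (q - i)) := by
                apply mul_le_mul_of_nonneg_right _ (by positivity)
                apply mul_le_mul_of_nonneg_left hfact (by positivity)
            _ = C * D * q.factorial * (ρ ^ q * x ^ i) := by rw [hpow]
      calc ‖∑ i ∈ Finset.range (q+1),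
          (if q - i < q then PowerSeries.coeff i S * PowerSeries.coeff (q - i) S⁻¹ else 0)‖
          ≤ ∑ i ∈ Finset.range (q+1),
            ‖if q - i < q then PowerSeries.coeff i S * PowerSeries.coeff (q - i) S⁻¹ else 0‖ :=
            norm_sum_le _ _
        _ ≤ ∑ i ∈ Finset.range (q+1),
            C * D * q.factorial * (if i = 0 then 0 else ρ ^ q * x ^ i) :=
            Finset.sum_le_sum step1
        _ = C * D * q.factorial * (ρ ^ q * (x * ∑ i ∈ Finset.range q, x ^ i)) := by
            rw [← Finset.mul_sum]
            congr 1
            rw [Finset.sum_range_succ']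
            simp only [Nat.succ_ne_zero, if_false, eq_self_iff_true, if_true, add_zero]
            simp only [Finset.mul_sum]
            exact Finset.sum_congr rfl fun i _ => by ring
        _ ≤ C * D * q.factorial * (ρ ^ q * (x / (1 - x))) := by
            have : x * ∑ i ∈ Finset.range q, x ^ i ≤ x / (1 - x) := by
              rw [div_eq_mul_one_div]
              exact mul_le_mul_of_nonneg_left (geo q) hx0.le
            gcongr
    calc a⁻¹ * ‖∑ i ∈ Finset.range (q+1),
          (if q - i < q then PowerSeries.coeff i S * PowerSeries.coeff (q - i) S⁻¹ else 0)‖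
        ≤ a⁻¹ * (C * D * q.factorial * (ρ ^ q * (x / (1 - x)))) := by
          exact mul_le_mul_of_nonneg_left key (by positivity)
      _ ≤ a⁻¹ * (C * D * q.factorial * (ρ ^ q * (a / C))) := by gcongr
      _ = D * ρ ^ q * q.factorial := by
          field_simp
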